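/- For m ≥ 1 let S_m denote the nilpotent Jordan cell of size m and eigenvalue 0: on an m-dimensional Hilbert space H_m with orthonormal basis e^m_1, …, e^m_m, S_m e^m_k = e^m_{k+1} for k ≤ m − 1 and S_m e^m_m = 0. Let A = ⊕_{m=1}^∞ S_m on H_A = ⊕_{m=1}^∞ H_m and B = ⊕_{m=2}^∞ S_m on H_B = ⊕_{m=2}^∞ H_m (Hilbert space orthogonal direct sums). Then A ≈ B (indeed B ≼ A via the natural embedding of H_B into H_A, and A ≼ B via the isometry Ω with Ω(e^m_k) = e^{m+1}_{k+1}), but A and B are not unitarily equivalent. -/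

import Mathlib

open ContinuousLinearMap

noncomputable section StmtAux

open scoped ENNReal

variable {I J : Type*} [DecidableEq I] [DecidableEq J]

private lemma lp_single_add (p : ℝ≥0∞) (i : I) (a b : ℂ) :
    (lp.single p i (a + b) : lp (fun _ : I => ℂ) p) = lp.single p i a + lp.single p i b := by
  apply lp.ext
  funext j
  simp only [lp.coeFn_add, Pi.add_apply, lp.single_apply, Pi.single_apply]
  split_ifs with h
  · subst h; simp
  · simp

private def embedV (σ : I → J) (i : I) : ℂ →ₗᵢ[ℂ] lp (fun _ : J => ℂ) 2 where
  toLinearMap :=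
    { toFun := fun c => lp.single 2 (σ i) c
      map_add' := fun a b => lp_single_add 2 (σ i) a b
      map_smul' := fun c a => by
        simpa using (lp.single_smul (E := fun _ : J => ℂ) 2 (σ i) c a) }
  norm_map' := fun c => by
    simpa using lp.norm_single (E := fun _ : J => ℂ) (p := 2) (by norm_num) (fun _ => c) (σ i)

private lemma embedV_apply (σ : I → J) (i : I) (c : ℂ) :
    embedV σ i c = lp.single 2 (σ i) c := rfl

private lemma embedV_orth (σ : I → J) (hσ : Function.Injective σ) :
    OrthogonalFamily ℂ (fun _ : I => ℂ) (embedV σ) := by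
  intro i j hij a b
  rw [embedV_apply, embedV_apply, lp.inner_single_left]
  rw [lp.single_apply_ne _ _ _ (fun h => hij (hσ h))]
  simp

private def embedIso (σ : I → J) (hσ : Function.Injective σ) :
    lp (fun _ : I => ℂ) 2 →ₗᵢ[ℂ] lp (fun _ : J => ℂ) 2 :=
  (embedV_orth σ hσ).linearIsometry

private lemma embedIso_single (σ : I → J) (hσ : Function.Injective σ) (i : I) :
    embedIso σ hσ (lp.single 2 i 1) = lp.single 2 (σ i) 1 :=
  (embedV_orth σ hσ).linearIsometry_apply_single (1 : ℂ)

/-- Two continuous linear maps out of `ℓ²(I)` agreeing on all basis singles agree everywhere. -/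
private lemma clm_ext_singles {Y : Type*} [NormedAddCommGroup Y] [NormedSpace ℂ Y]
    (T S : lp (fun _ : I => ℂ) 2 →L[ℂ] Y)
    (h : ∀ i, T (lp.single 2 i 1) = S (lp.single 2 i 1)) (x : lp (fun _ : I => ℂ) 2) :
    T x = S x := by
  have hx : HasSum (fun i : I => lp.single 2 i (x i)) x :=
    lp.hasSum_single (by norm_num) x
  have hsingle : ∀ i : I, (lp.single 2 i (x i) : lp (fun _ : I => ℂ) 2)
      = x i • lp.single 2 i 1 := by
    intro i
    rw [← lp.single_smul]
    norm_num
  have hT : HasSum (fun i : I => T (lp.single 2 i (x i))) (T x) := T.hasSum hx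
  have hS : HasSum (fun i : I => S (lp.single 2 i (x i))) (S x) := S.hasSum hx
  have heq : (fun i : I => T (lp.single 2 i (x i))) = fun i : I => S (lp.single 2 i (x i)) := by
    funext i
    rw [hsingle i, map_smul, map_smul, h i]
  exact hT.unique (heq ▸ hS)


private lemma inner_single_single (i j : I) :
    (inner ℂ (lp.single 2 i (1:ℂ) : lp (fun _ : I => ℂ) 2) (lp.single 2 j (1:ℂ)) : ℂ)
      = if i = j then 1 else 0 := by
  rw [lp.inner_single_left]
  by_cases h : i = j
  · subst h
    rw [lp.single_apply_self, if_pos rfl]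
    simp
  · rw [lp.single_apply_ne _ _ _ h, if_neg h]
    simp

private lemma sigma_fin_eq_iff {m m' a b : ℕ} (ha : a < m + 2) (hb : b < m' + 2) :
    (⟨m, ⟨a, ha⟩⟩ : (n : ℕ) × Fin (n + 2)) = ⟨m', ⟨b, hb⟩⟩ ↔ m = m' ∧ a = b := by
  constructor
  · intro h
    have h1 : m = m' := congrArg Sigma.fst h
    subst h1
    obtain ⟨-, h2⟩ := Sigma.mk.inj_iff.mp h
    exact ⟨rfl, by simpa [Fin.ext_iff] using h2⟩
  · rintro ⟨rfl, rfl⟩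
    rfl

end StmtAux

set_option maxHeartbeats 2000000 in
theorem stmt_13
    (A : lp (fun _ : (m : ℕ) × Fin (m + 1) => ℂ) 2 →L[ℂ] lp (fun _ : (m : ℕ) × Fin (m + 1) => ℂ) 2)
    (B : lp (fun _ : (m : ℕ) × Fin (m + 2) => ℂ) 2 →L[ℂ] lp (fun _ : (m : ℕ) × Fin (m + 2) => ℂ) 2)
    (hA : ∀ (m : ℕ) (k : Fin (m + 1)),
      A (lp.single 2 ⟨m, k⟩ 1) =
        if h : (k : ℕ) + 1 < m + 1 then lp.single 2 ⟨m, ⟨(k : ℕ) + 1, h⟩⟩ 1 else 0)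
    (hB : ∀ (m : ℕ) (k : Fin (m + 2)),
      B (lp.single 2 ⟨m, k⟩ 1) =
        if h : (k : ℕ) + 1 < m + 2 then lp.single 2 ⟨m, ⟨(k : ℕ) + 1, h⟩⟩ 1 else 0) :
    -- `B ≼ A`
    (∃ Ω' : lp (fun _ : (m : ℕ) × Fin (m + 2) => ℂ) 2 →ₗᵢ[ℂ]
        lp (fun _ : (m : ℕ) × Fin (m + 1) => ℂ) 2,
      ∀ x, Ω' (B x) = A (Ω' x)) ∧
    -- `A ≼ B`
    (∃ Ω : lp (fun _ : (m : ℕ) × Fin (m + 1) => ℂ) 2 →ₗᵢ[ℂ]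
        lp (fun _ : (m : ℕ) × Fin (m + 2) => ℂ) 2,
      ∀ x, Ω (A x) = B (Ω x)) ∧
    -- but `A` and `B` are not unitarily equivalent
    (¬ ∃ W : lp (fun _ : (m : ℕ) × Fin (m + 1) => ℂ) 2 ≃ₗᵢ[ℂ]
        lp (fun _ : (m : ℕ) × Fin (m + 2) => ℂ) 2,
      ∀ x, W (A x) = B (W x)) := by
  classical
  refine ⟨?_, ?_, ?_⟩
  · -- B ≼ A via σ' ⟨m, k⟩ = ⟨m+1, k⟩
    set σ' : ((m : ℕ) × Fin (m + 2)) → ((m : ℕ) × Fin (m + 1)) :=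
      fun p => ⟨p.1 + 1, p.2⟩ with hσ'def
    have hσ' : Function.Injective σ' := by
      rintro ⟨m, k⟩ ⟨m', k'⟩ h
      simp only [hσ'def] at h
      obtain ⟨h1, h2⟩ := Sigma.mk.inj_iff.mp h
      obtain rfl : m = m' := by omega
      simpa using h2
    refine ⟨embedIso σ' hσ', ?_⟩
    refine clm_ext_singles ((embedIso σ' hσ').toContinuousLinearMap.comp B)
      (A.comp (embedIso σ' hσ').toContinuousLinearMap) ?_
    rintro ⟨m, k⟩
    simp only [ContinuousLinearMap.comp_apply, LinearIsometry.coe_toContinuousLinearMap]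
    rw [hB m k, embedIso_single σ' hσ' ⟨m, k⟩]
    show _ = A (lp.single 2 ⟨m + 1, k⟩ 1)
    rw [hA (m + 1) k]
    by_cases h : (k : ℕ) + 1 < m + 2
    · rw [dif_pos h, dif_pos h, embedIso_single σ' hσ']
    · rw [dif_neg h, dif_neg h, map_zero]
  · -- A ≼ B via σ ⟨m, k⟩ = ⟨m, k.succ⟩
    set σ : ((m : ℕ) × Fin (m + 1)) → ((m : ℕ) × Fin (m + 2)) :=
      fun p => ⟨p.1, p.2.succ⟩ with hσdef
    have hσ : Function.Injective σ := by
      rintro ⟨m, k⟩ ⟨m', k'⟩ h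
      simp only [hσdef] at h
      obtain ⟨h1, h2⟩ := Sigma.mk.inj_iff.mp h
      subst h1
      rw [heq_iff_eq] at h2
      simpa using Fin.succ_injective _ h2
    refine ⟨embedIso σ hσ, ?_⟩
    refine clm_ext_singles ((embedIso σ hσ).toContinuousLinearMap.comp A)
      (B.comp (embedIso σ hσ).toContinuousLinearMap) ?_
    rintro ⟨m, k⟩
    simp only [ContinuousLinearMap.comp_apply, LinearIsometry.coe_toContinuousLinearMap]
    rw [hA m k, embedIso_single σ hσ ⟨m, k⟩]
    show _ = B (lp.single 2 ⟨m, k.succ⟩ 1)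
    rw [hB m k.succ]
    by_cases h : (k : ℕ) + 1 < m + 1
    · have h' : (↑(Fin.succ k) : ℕ) + 1 < m + 2 := by
        simp only [Fin.val_succ]; omega
      rw [dif_pos h, dif_pos h', embedIso_single σ hσ]
      have hidx : σ ⟨m, ⟨(k : ℕ) + 1, h⟩⟩
          = (⟨m, ⟨(↑(Fin.succ k) : ℕ) + 1, h'⟩⟩ : (n : ℕ) × Fin (n + 2)) := by
        simp only [hσdef]
        simp [Sigma.mk.inj_iff, Fin.ext_iff]
      rw [hidx]
    · rw [dif_neg h, dif_neg (by simp only [Fin.val_succ]; omega), map_zero]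
  · -- not unitarily equivalent
    rintro ⟨W, hW⟩
    set i0 : (m : ℕ) × Fin (m + 1) := ⟨0, ⟨0, by omega⟩⟩ with hi0
    set e0 : lp (fun _ : (m : ℕ) × Fin (m + 1) => ℂ) 2 := lp.single 2 i0 1 with he0
    have hAe0 : A e0 = 0 := by
      rw [he0, hi0, hA 0 ⟨0, by omega⟩]
      rw [dif_neg (by simp)]
    -- the first coordinate functional kills the range of A
    have hA0 : ∀ w, (inner ℂ e0 (A w) : ℂ) = 0 := by
      intro w
      have h := clm_ext_singles ((innerSL ℂ e0).comp A) 0 ?_ w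
      · simpa using h
      · rintro ⟨m, k⟩
        simp only [ContinuousLinearMap.comp_apply, innerSL_apply_apply,
          ContinuousLinearMap.zero_apply]
        rw [hA m k]
        by_cases h : (k : ℕ) + 1 < m + 1
        · rw [dif_pos h, lp.inner_single_right]
          rw [he0, lp.single_apply_ne]
          · simp
          · intro hh
            have hm : m = 0 := congrArg Sigma.fst hh
            omega
        · rw [dif_neg h]
          simp
    -- properties of y := W e0
    have hBy : B (W e0) = 0 := by
      rw [← hW e0, hAe0, map_zero]
    have hY : ∀ z, (inner ℂ ((W e0 : lp _ 2)) (B z) : ℂ) = 0 := by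
      intro z
      have hz : z = W (W.symm z) := (W.apply_symm_apply z).symm
      rw [hz, ← hW (W.symm z), LinearIsometryEquiv.inner_map_map]
      exact hA0 _
    -- every coordinate of W e0 vanishes
    have hcoord : ∀ (m : ℕ) (k : Fin (m + 2)), (W e0 : lp _ 2) ⟨m, k⟩ = 0 := by
      intro m k
      obtain ⟨kv, hk⟩ := k
      match kv, hk with
      | 0, hk =>
        -- use B (W e0) = 0 and the identity ⟪e_{m,1}, B y⟫ = ⟪e_{m,0}, y⟫
        have key := clm_ext_singles
          ((innerSL ℂ (lp.single 2 ⟨m, (⟨1, by omega⟩ : Fin (m+2))⟩ 1)).comp B)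
          (innerSL ℂ (lp.single 2 ⟨m, (⟨0, by omega⟩ : Fin (m+2))⟩ 1)) ?_ (W e0)
        · simp only [ContinuousLinearMap.comp_apply, innerSL_apply_apply] at key
          rw [hBy, inner_zero_right] at key
          rw [lp.inner_single_left] at key
          simpa using key.symm
        · rintro ⟨m', k'⟩
          simp only [ContinuousLinearMap.comp_apply, innerSL_apply_apply]
          rw [hB m' k']
          by_cases h : (k' : ℕ) + 1 < m' + 2
          · rw [dif_pos h]
            obtain ⟨k'v, hk'⟩ := k'
            rw [inner_single_single, inner_single_single]
            simp only [sigma_fin_eq_iff, Fin.val_mk]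
            split_ifs with h1 h2 h2 <;> first | rfl | (exfalso; omega)
          · rw [dif_neg h, inner_zero_right, inner_single_single]
            obtain ⟨k'v, hk'⟩ := k'
            simp only [Fin.val_mk] at h
            simp only [sigma_fin_eq_iff, Fin.val_mk]
            split_ifs with h1
            · exfalso; omega
            · rfl
      | (kv + 1), hk =>
        have key := hY (lp.single 2 ⟨m, (⟨kv, by omega⟩ : Fin (m+2))⟩ 1)
        rw [hB m ⟨kv, by omega⟩] at key
        rw [dif_pos (by simpa using hk)] at key
        rw [lp.inner_single_right, RCLike.inner_apply, one_mul] at key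
        have h3 := congrArg (starRingEnd ℂ) key
        rw [RingHomCompTriple.comp_apply, RingHom.id_apply, map_zero] at h3
        exact h3
    have hWe0 : W e0 = 0 := by
      apply lp.ext
      funext j
      obtain ⟨m, k⟩ := j
      exact hcoord m k
    have hnorm : ‖e0‖ = 1 := by
      rw [he0]
      simpa using lp.norm_single (E := fun _ : (m : ℕ) × Fin (m + 1) => ℂ) (p := 2)
        (by norm_num) (fun _ => (1:ℂ)) i0
    have : ‖(W e0 : lp _ 2)‖ = 1 := by rw [W.norm_map, hnorm]
    rw [hWe0] at this
    simp at this
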